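/- Let q be a complex number with |q| ≠ 1, m, n positive integers, and u a nonzero complex number with u ≠ q^k for all integers k. Then the instanton part of the 5d pure SU(2) Nekrasov partition function Z_inst(u; q^{-m}, q^n | z) = ∑_{λ⁽¹⁾,λ⁽²⁾} (q^{m-n} z)^{|λ⁽¹⁾|+|λ⁽²⁾|} / ∏_{i,j=1}^2 N_{λ⁽ⁱ⁾,λ⁽ʲ⁾}(u_i/u_j; q^{-m}, q^n), with u₁/u₂ = u, u₂/u₁ = u^{-1}, u₁/u₁ = u₂/u₂ = 1, converges absolutely for every z ∈ ℂ, and moreover is bounded by exp(C|z|) for an explicit constant C depending only on q, m, n, u. -/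

import Mathlib

open scoped BigOperators

/-- Arm length (as an integer, possibly negative) of the box `s` with respect to the
Young diagram `μ`: `a_μ(s) = μ_{s₁} − s₂ − 1` in 0-indexed conventions. -/
def armZ (μ : YoungDiagram) (s : ℕ × ℕ) : ℤ := (μ.rowLen s.1 : ℤ) - s.2 - 1

/-- Leg length (as an integer, possibly negative) of the box `s` with respect to the
Young diagram `μ`. -/
def legZ (μ : YoungDiagram) (s : ℕ × ℕ) : ℤ := (μ.colLen s.2 : ℤ) - s.1 - 1

/-- The Nekrasov factor
`N_{λ,μ}(u; q₁, q₂) = ∏_{s∈λ}(1 − u·q₂^{−a_μ(s)−1}·q₁^{l_λ(s)}) ·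
∏_{s∈μ}(1 − u·q₂^{a_λ(s)}·q₁^{−l_μ(s)−1})`. -/
noncomputable def nekrasovFactor (u q₁ q₂ : ℂ) (lam mu : YoungDiagram) : ℂ :=
  (∏ s ∈ lam.cells, (1 - u * q₂ ^ (-armZ mu s - 1) * q₁ ^ legZ lam s)) *
    ∏ s ∈ mu.cells, (1 - u * q₂ ^ armZ lam s * q₁ ^ (-legZ mu s - 1))

/-- The summand of the 5d pure `SU(2)` instanton partition function
`Z_inst(u; q^{-m}, q^{n} | z)` attached to a pair of partitions
`P = (λ⁽¹⁾, λ⁽²⁾)`: `(q^{m-n} z)^{|λ⁽¹⁾|+|λ⁽²⁾|} / ∏_{i,j=1}^2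
N_{λ⁽ⁱ⁾,λ⁽ʲ⁾}(u_i/u_j; q^{-m}, q^{n})` with `u₁/u₂ = u`. -/
noncomputable def zInstTerm (u q z : ℂ) (m n : ℕ)
    (P : YoungDiagram × YoungDiagram) : ℂ :=
  (q ^ ((m : ℤ) - (n : ℤ)) * z) ^ (P.1.card + P.2.card) /
    (nekrasovFactor 1 (q ^ (-(m : ℤ))) (q ^ (n : ℤ)) P.1 P.1 *
      nekrasovFactor u (q ^ (-(m : ℤ))) (q ^ (n : ℤ)) P.1 P.2 *
      nekrasovFactor u⁻¹ (q ^ (-(m : ℤ))) (q ^ (n : ℤ)) P.2 P.1 *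
      nekrasovFactor 1 (q ^ (-(m : ℤ))) (q ^ (n : ℤ)) P.2 P.2)

noncomputable def Complex.abs : AbsoluteValue ℂ ℝ :=
  IsAbsoluteValue.toAbsoluteValue (norm : ℂ → ℝ)

theorem Complex.norm_eq_abs (z : ℂ) : ‖z‖ = Complex.abs z := rfl

namespace ZInstAux
open Finset

/-- natural-number hook length of a box. -/
def hookN (lam : YoungDiagram) (s : ℕ × ℕ) : ℕ :=
  (lam.rowLen s.1 - s.2) + (lam.colLen s.2 - s.1) - 1

/-- total hook sum. -/
def hookSum (lam : YoungDiagram) : ℕ := ∑ s ∈ lam.cells, hookN lam s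

lemma cells_eq_biUnion (lam : YoungDiagram) :
    lam.cells = (range (lam.colLen 0)).biUnion
      (fun i => {i} ×ˢ range (lam.rowLen i)) := by
  ext ⟨i, j⟩
  simp only [Finset.mem_biUnion, Finset.mem_range, Finset.mem_product,
    Finset.mem_singleton, YoungDiagram.mem_cells]
  constructor
  · intro h
    refine ⟨i, ?_, rfl, YoungDiagram.mem_iff_lt_rowLen.mp h⟩
    have : (i, 0) ∈ lam := lam.up_left_mem le_rfl (Nat.zero_le j) h
    exact YoungDiagram.mem_iff_lt_colLen.mp this
  · rintro ⟨i', hi', rfl, hj⟩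
    exact YoungDiagram.mem_iff_lt_rowLen.mpr hj

lemma sum_cells (lam : YoungDiagram) (F : ℕ × ℕ → ℕ) :
    ∑ s ∈ lam.cells, F s =
      ∑ i ∈ range (lam.colLen 0), ∑ j ∈ range (lam.rowLen i), F (i, j) := by
  rw [cells_eq_biUnion]
  rw [Finset.sum_biUnion]
  · refine Finset.sum_congr rfl fun i _ => ?_
    rw [Finset.sum_product]
    simp
  · intro a _ b _ hab
    simp only [Finset.disjoint_left, Finset.mem_product, Finset.mem_singleton]
    rintro ⟨x, y⟩ ⟨rfl, -⟩ ⟨h, -⟩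
    exact hab (by simpa using h)

lemma card_eq_sum_rowLen (lam : YoungDiagram) :
    lam.card = ∑ i ∈ range (lam.colLen 0), lam.rowLen i := by
  have := sum_cells lam (fun _ => 1)
  simpa [YoungDiagram.card] using this

lemma sum_rowLens_eq_card (lam : YoungDiagram) :
    lam.rowLens.sum = lam.card := by
  rw [card_eq_sum_rowLen, YoungDiagram.rowLens]
  induction (lam.colLen 0) with
  | zero => simp
  | succ n ih => rw [Finset.sum_range_succ, List.range_succ]; simp [ih]

lemma two_mul_sum_range_sub (L : ℕ) :
    2 * (∑ j ∈ range L, (L - j)) = L ^ 2 + L := by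
  induction L with
  | zero => simp
  | succ n ih =>
      rw [Finset.sum_range_succ]
      have : ∑ j ∈ range n, (n + 1 - j) = ∑ j ∈ range n, ((n - j) + 1) := by
        refine Finset.sum_congr rfl fun j hj => ?_
        have := Finset.mem_range.mp hj
        omega
      rw [Finset.sum_add_distrib, Finset.sum_const, Finset.card_range, smul_eq_mul,
        mul_one] at this
      rw [this]
      ring_nf
      omega

lemma hookN_ge_row {lam : YoungDiagram} {s : ℕ × ℕ} (hs : s ∈ lam.cells) :
    lam.rowLen s.1 - s.2 ≤ hookN lam s := by
  have h1 : s.2 < lam.rowLen s.1 := by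
    rw [← YoungDiagram.mem_iff_lt_rowLen]; exact (YoungDiagram.mem_cells _).mp hs
  have h2 : s.1 < lam.colLen s.2 := by
    rw [← YoungDiagram.mem_iff_lt_colLen]
    rcases s with ⟨a, b⟩; exact (YoungDiagram.mem_cells _).mp hs
  unfold hookN; omega

lemma hookN_ge_col {lam : YoungDiagram} {s : ℕ × ℕ} (hs : s ∈ lam.cells) :
    lam.colLen s.2 - s.1 ≤ hookN lam s := by
  have h1 : s.2 < lam.rowLen s.1 := by
    rw [← YoungDiagram.mem_iff_lt_rowLen]; exact (YoungDiagram.mem_cells _).mp hs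
  unfold hookN; omega

/-- `2 r H ≥ k²`. -/
lemma key1 (lam : YoungDiagram) :
    lam.card ^ 2 ≤ 2 * lam.colLen 0 * hookSum lam := by
  set r := lam.colLen 0
  have h1 : lam.card ^ 2 ≤ r * ∑ i ∈ range r, lam.rowLen i ^ 2 := by
    rw [card_eq_sum_rowLen]
    simpa using sq_sum_le_card_mul_sum_sq (s := range r) (f := fun i => lam.rowLen i)
  have h2 : ∑ i ∈ range r, lam.rowLen i ^ 2 ≤ 2 * hookSum lam := by
    have hH : ∑ s ∈ lam.cells, (lam.rowLen s.1 - s.2) ≤ hookSum lam :=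
      Finset.sum_le_sum fun s hs => hookN_ge_row hs
    have hrow : ∑ s ∈ lam.cells, (lam.rowLen s.1 - s.2)
        = ∑ i ∈ range r, ∑ j ∈ range (lam.rowLen i), (lam.rowLen i - j) :=
      sum_cells lam _
    calc ∑ i ∈ range r, lam.rowLen i ^ 2
        ≤ ∑ i ∈ range r, (lam.rowLen i ^ 2 + lam.rowLen i) :=
          Finset.sum_le_sum fun i _ => Nat.le_add_right _ _
      _ = 2 * ∑ i ∈ range r, ∑ j ∈ range (lam.rowLen i), (lam.rowLen i - j) := by
          rw [Finset.mul_sum]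
          exact (Finset.sum_congr rfl fun i _ => (two_mul_sum_range_sub _).symm)
      _ ≤ 2 * hookSum lam := by
          rw [← hrow]; exact Nat.mul_le_mul_left 2 hH
  calc lam.card ^ 2 ≤ r * ∑ i ∈ range r, lam.rowLen i ^ 2 := h1
    _ ≤ r * (2 * hookSum lam) := Nat.mul_le_mul_left r h2
    _ = 2 * r * hookSum lam := by ring

/-- `2 H ≥ r²`. -/
lemma key2 (lam : YoungDiagram) :
    lam.colLen 0 ^ 2 ≤ 2 * hookSum lam := by
  set r := lam.colLen 0 with hr
  have hsub : (range r).image (fun i => (i, 0)) ⊆ lam.cells := by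
    intro s hs
    simp only [Finset.mem_image, Finset.mem_range] at hs
    obtain ⟨i, hi, rfl⟩ := hs
    rw [YoungDiagram.mem_cells]
    exact YoungDiagram.mem_iff_lt_colLen.mpr hi
  have hineq : ∑ i ∈ range r, (r - i) ≤ hookSum lam := by
    have h1 : ∑ s ∈ (range r).image (fun i => (i, 0)), hookN lam s ≤ hookSum lam :=
      Finset.sum_le_sum_of_subset hsub
    have h2 : ∑ s ∈ (range r).image (fun i => (i, 0)), hookN lam s
        = ∑ i ∈ range r, hookN lam (i, 0) := by
      rw [Finset.sum_image]
      intro a _ b _ h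
      exact (Prod.mk.injEq _ _ _ _).mp h |>.1
    have h3 : ∀ i ∈ range r, r - i ≤ hookN lam (i, 0) := by
      intro i hi
      have : (i, 0) ∈ lam.cells := hsub (Finset.mem_image_of_mem _ hi)
      exact le_trans (le_refl _) (hookN_ge_col this)
    calc ∑ i ∈ range r, (r - i) ≤ ∑ i ∈ range r, hookN lam (i, 0) :=
          Finset.sum_le_sum h3
      _ ≤ hookSum lam := by rw [← h2]; exact h1
  have := two_mul_sum_range_sub r
  omega

/-- main combinatorial inequality: `k⁴ ≤ 8 H³`. -/
lemma key3 (lam : YoungDiagram) :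
    lam.card ^ 4 ≤ 8 * hookSum lam ^ 3 := by
  have h1 := key1 lam
  have h2 := key2 lam
  set r := lam.colLen 0
  set H := hookSum lam
  set k := lam.card
  have e1 : k ^ 4 ≤ (2 * r * H) ^ 2 := by
    calc k ^ 4 = (k ^ 2) ^ 2 := by ring
      _ ≤ (2 * r * H) ^ 2 := Nat.pow_le_pow_left h1 2
  have e2 : (2 * r * H) ^ 2 = 4 * r ^ 2 * H ^ 2 := by ring
  calc k ^ 4 ≤ 4 * r ^ 2 * H ^ 2 := by omega
    _ ≤ 4 * (2 * H) * H ^ 2 := by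
        have := Nat.mul_le_mul_right (H ^ 2) (Nat.mul_le_mul_left 4 h2)
        simpa [Nat.mul_assoc] using this
    _ = 8 * H ^ 3 := by ring


noncomputable def toComp (k : ℕ) (lam : YoungDiagram) : Composition k :=
  if h : lam.card = k then
    ⟨lam.rowLens, fun {x} hx => lam.pos_of_mem_rowLens x hx,
      by rw [sum_rowLens_eq_card]; exact h⟩
  else Composition.ones k

lemma count_card (V : Finset YoungDiagram) (k : ℕ) :
    (V.filter (fun lam => lam.card = k)).card ≤ 2 ^ k := by
  have hinj : Set.InjOn (toComp k) (V.filter (fun lam => lam.card = k)) := by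
    intro a ha b hb hab
    simp only [Finset.coe_filter, Set.mem_setOf_eq] at ha hb
    unfold toComp at hab
    rw [dif_pos ha.2, dif_pos hb.2] at hab
    have hlist : a.rowLens = b.rowLens := congrArg Composition.blocks hab
    have := congrArg YoungDiagram.equivListRowLens.symm
      (Subtype.ext (p := fun w : List ℕ => w.SortedGE ∧ ∀ x ∈ w, 0 < x) hlist :
        YoungDiagram.equivListRowLens a = YoungDiagram.equivListRowLens b)
    simpa using this
  calc (V.filter (fun lam => lam.card = k)).card
      ≤ (Finset.univ : Finset (Composition k)).card :=
        Finset.card_le_card_of_injOn (toComp k) (fun a _ => Finset.mem_univ _) hinj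
    _ = 2 ^ (k - 1) := by rw [Finset.card_univ, composition_card]
    _ ≤ 2 ^ k := Nat.pow_le_pow_right (by norm_num) (Nat.sub_le _ _)

/-- finite sums of `x^card/card!` are at most `exp (2x)`. -/
lemma sum_phi_le (V : Finset YoungDiagram) (x : ℝ) (hx : 0 ≤ x) :
    ∑ lam ∈ V, x ^ lam.card / (Nat.factorial lam.card : ℝ) ≤ Real.exp (2 * x) := by
  classical
  set N := V.sup YoungDiagram.card + 1 with hN
  have hmaps : ∀ lam ∈ V, lam.card ∈ range N := by
    intro lam hlam
    exact Finset.mem_range.mpr (Nat.lt_succ_of_le (Finset.le_sup hlam))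
  have hfib := Finset.sum_fiberwise_of_maps_to hmaps (fun lam => x ^ lam.card / (Nat.factorial lam.card : ℝ))
  rw [← hfib]
  have hk : ∀ k ∈ range N,
      (∑ lam ∈ V.filter (fun lam => lam.card = k), x ^ lam.card / (Nat.factorial lam.card : ℝ))
        ≤ (2 * x) ^ k / (Nat.factorial k : ℝ) := by
    intro k _
    have : ∀ lam ∈ V.filter (fun lam => lam.card = k),
        x ^ lam.card / (Nat.factorial lam.card : ℝ) = x ^ k / (Nat.factorial k : ℝ) := by
      intro lam hlam
      have := (Finset.mem_filter.mp hlam).2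
      rw [this]
    rw [Finset.sum_congr rfl this, Finset.sum_const, nsmul_eq_mul]
    have h2 : ((V.filter (fun lam => lam.card = k)).card : ℝ) ≤ 2 ^ k := by
      exact_mod_cast count_card V k
    have hpos : (0:ℝ) ≤ x ^ k / (Nat.factorial k : ℝ) := by positivity
    calc ((V.filter (fun lam => lam.card = k)).card : ℝ) * (x ^ k / (Nat.factorial k : ℝ))
        ≤ 2 ^ k * (x ^ k / (Nat.factorial k : ℝ)) := by gcongr
      _ = (2 * x) ^ k / (Nat.factorial k : ℝ) := by rw [mul_pow]; ring
  calc ∑ k ∈ range N, ∑ lam ∈ V.filter (fun lam => lam.card = k),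
        x ^ lam.card / (Nat.factorial lam.card : ℝ)
      ≤ ∑ k ∈ range N, (2 * x) ^ k / (Nat.factorial k : ℝ) := Finset.sum_le_sum hk
    _ ≤ Real.exp (2 * x) := Real.sum_le_exp_of_nonneg (by linarith) N


lemma pow_div_factorial_le_exp (y : ℝ) (hy : 0 ≤ y) (n : ℕ) :
    y ^ n / (Nat.factorial n : ℝ) ≤ Real.exp y := by
  have h := Real.sum_le_exp_of_nonneg hy (n + 1)
  refine le_trans ?_ h
  have : y ^ n / (Nat.factorial n : ℝ)
      = ∑ i ∈ {n}, y ^ i / (Nat.factorial i : ℝ) := by simp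
  rw [this]
  refine Finset.sum_le_sum_of_subset_of_nonneg ?_ ?_
  · intro i hi; simp only [Finset.mem_singleton] at hi; subst hi
    exact Finset.mem_range.mpr (Nat.lt_succ_self _)
  · intro i _ _; positivity

/-- If `k⁴ ≤ 8 x³` then `k! ≤ C₀^k σ^(c x)` where
`C₀ = 216 * (max 1 L⁻¹)³`, `L = c * log σ`. -/
lemma factorial_le_pow_hook (σ : ℝ) (hσ : 1 < σ) (c : ℕ) (hc : 1 ≤ c)
    (x k : ℕ) (h : k ^ 4 ≤ 8 * x ^ 3) :
    (Nat.factorial k : ℝ) ≤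
      (216 * (max 1 ((c : ℝ) * Real.log σ)⁻¹) ^ 3) ^ k * σ ^ (c * x) := by
  set L : ℝ := (c : ℝ) * Real.log σ with hL
  have hlog : 0 < Real.log σ := Real.log_pos hσ
  have hLpos : 0 < L := by
    apply mul_pos _ hlog
    exact_mod_cast Nat.lt_of_lt_of_le Nat.zero_lt_one hc
  set C₀ : ℝ := 216 * (max 1 L⁻¹) ^ 3 with hC₀
  have hC₀pos : 0 < C₀ := by positivity
  have hexp : σ ^ (c * x) = Real.exp (L * x) := by
    rw [← Real.exp_log (lt_trans zero_lt_one hσ), ← Real.exp_nat_mul]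
    congr 1
    push_cast [hL]
    ring
  rw [hexp]
  have hfpos : (0:ℝ) < (Nat.factorial (3 * k) : ℝ) := by
    exact_mod_cast Nat.factorial_pos (3 * k)
  have hCL : 216 ≤ C₀ * L ^ 3 := by
    have e0 : (max 1 L⁻¹) * L = max L 1 := by
      rw [max_mul_of_nonneg _ _ (le_of_lt hLpos), one_mul,
        inv_mul_cancel₀ (ne_of_gt hLpos), max_comm]
    have h2 : (max 1 L⁻¹) ^ 3 * L ^ 3 = (max L 1) ^ 3 := by
      rw [← mul_pow, e0]
    have h3 : (1:ℝ) ≤ (max L 1) ^ 3 := one_le_pow₀ (le_max_right _ _)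
    calc (216:ℝ) = 216 * 1 := by ring
      _ ≤ 216 * (max L 1) ^ 3 := by linarith
      _ = C₀ * L ^ 3 := by rw [hC₀, mul_assoc, h2]
  have hx3 : ((k : ℝ) ^ 4 / 8) ≤ (x : ℝ) ^ 3 := by
    rw [div_le_iff₀ (by norm_num)]
    calc ((k:ℝ)^4) ≤ 8 * (x:ℝ)^3 := by exact_mod_cast h
      _ = (x:ℝ)^3 * 8 := by ring
  have hxpow : ((k : ℝ) ^ 4 / 8) ^ k ≤ ((x : ℝ) ^ 3) ^ k :=
    pow_le_pow_left₀ (by positivity) hx3 k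
  have hfact1 : (Nat.factorial k : ℝ) ≤ (k : ℝ) ^ k := by
    exact_mod_cast Nat.factorial_le_pow k
  have hfact2 : (Nat.factorial (3 * k) : ℝ) ≤ ((3 : ℝ) * k) ^ (3 * k) := by
    have := Nat.factorial_le_pow (3 * k)
    calc (Nat.factorial (3*k) : ℝ) ≤ ((3 * k : ℕ) : ℝ) ^ (3 * k) := by exact_mod_cast this
      _ = ((3:ℝ) * k) ^ (3*k) := by push_cast; ring_nf
  have hlhs : (Nat.factorial k : ℝ) * (Nat.factorial (3 * k) : ℝ)
      ≤ (27:ℝ) ^ k * ((k:ℝ)^4) ^ k := by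
    calc (Nat.factorial k : ℝ) * (Nat.factorial (3 * k) : ℝ)
        ≤ (k : ℝ) ^ k * ((3:ℝ) * k) ^ (3 * k) :=
          mul_le_mul hfact1 hfact2 (by positivity) (by positivity)
      _ = (k:ℝ)^k * ((3:ℝ)^(3*k) * (k:ℝ)^(3*k)) := by rw [mul_pow]
      _ = (3:ℝ)^(3*k) * ((k:ℝ)^k * (k:ℝ)^(3*k)) := by ring
      _ = (3:ℝ)^(3*k) * (k:ℝ)^(k + 3*k) := by rw [pow_add]
      _ = (27:ℝ) ^ k * ((k:ℝ)^4) ^ k := by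
          rw [show k + 3*k = 4*k from by ring, pow_mul, pow_mul]
          norm_num
  have hrhs : (27:ℝ) ^ k * ((k:ℝ)^4) ^ k ≤ C₀ ^ k * (L * x) ^ (3 * k) := by
    calc (27:ℝ) ^ k * ((k:ℝ)^4) ^ k = ((27:ℝ) * (k:ℝ)^4) ^ k := by rw [mul_pow]
      _ ≤ (C₀ * L^3 * ((k:ℝ)^4/8)) ^ k := by
          apply pow_le_pow_left₀ (by positivity)
          have h8 : (0:ℝ) ≤ (k:ℝ)^4/8 := by positivity
          have := mul_le_mul_of_nonneg_right hCL h8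
          calc (27:ℝ) * (k:ℝ)^4 = 216 * ((k:ℝ)^4/8) := by ring
            _ ≤ C₀ * L^3 * ((k:ℝ)^4/8) := this
      _ = (C₀ * L^3) ^ k * ((k:ℝ)^4/8) ^ k := by rw [mul_pow]
      _ ≤ (C₀ * L^3) ^ k * ((x:ℝ)^3) ^ k :=
          mul_le_mul_of_nonneg_left hxpow (by positivity)
      _ = C₀ ^ k * (L * x) ^ (3 * k) := by
          rw [mul_pow C₀ (L^3), mul_pow L (x:ℝ), pow_mul L 3 k, pow_mul (x:ℝ) 3 k]
          ring
  have hmain : (Nat.factorial k : ℝ) * (Nat.factorial (3 * k) : ℝ)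
      ≤ C₀ ^ k * (L * x) ^ (3 * k) := le_trans hlhs hrhs
  have h2 : (Nat.factorial k : ℝ)
      ≤ C₀ ^ k * (L * x) ^ (3 * k) / (Nat.factorial (3*k) : ℝ) :=
    (le_div_iff₀ hfpos).mpr hmain
  have h1 : (L * x) ^ (3 * k) / (Nat.factorial (3 * k) : ℝ) ≤ Real.exp (L * x) :=
    pow_div_factorial_le_exp _ (by positivity) _
  calc (Nat.factorial k : ℝ)
      ≤ C₀ ^ k * (L * x) ^ (3 * k) / (Nat.factorial (3*k) : ℝ) := h2
    _ = C₀ ^ k * ((L * x) ^ (3 * k) / (Nat.factorial (3*k) : ℝ)) := by ring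
    _ ≤ C₀ ^ k * Real.exp (L * x) :=
        mul_le_mul_of_nonneg_left h1 (by positivity)


/-- uniform lower bound on `|1 - u q^E|`, core case `1 < |q|`. -/
lemma unif_core (q u : ℂ) (hρ : 1 < Complex.abs q) (hu0 : u ≠ 0)
    (hu : ∀ k : ℤ, u ≠ q ^ k) :
    ∃ ε : ℝ, 0 < ε ∧ ε ≤ 1 ∧ ∀ E : ℤ, ε ≤ Complex.abs (1 - u * q ^ E) := by
  set ρ := Complex.abs q with hρdef
  have hq0 : q ≠ 0 := by
    intro h
    rw [hρdef, h] at hρ; simp at hρ; linarith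
  have hau : 0 < Complex.abs u := by simpa using hu0
  obtain ⟨N, hN⟩ := pow_unbounded_of_one_lt (2 / Complex.abs u + 2 * Complex.abs u) hρ
  have hN1 : 2 / Complex.abs u < ρ ^ N := by
    have : 0 < 2 * Complex.abs u := by positivity
    linarith
  have hN2 : 2 * Complex.abs u < ρ ^ N := by
    have : 0 < 2 / Complex.abs u := by positivity
    linarith
  -- each |1 - u q^E| is positive
  have hpos : ∀ E : ℤ, 0 < Complex.abs (1 - u * q ^ E) := by
    intro E
    rw [AbsoluteValue.pos_iff]
    intro hzero
    have : u * q ^ E = 1 := by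
      have := sub_eq_zero.mp hzero
      linear_combination -this
    have hqE : q ^ E ≠ 0 := zpow_ne_zero E hq0
    have : u = q ^ (-E) := by
      rw [zpow_neg]
      field_simp
      linear_combination this
    exact hu (-E) this
  -- min over the middle range
  set T : Finset ℤ := Finset.Icc (-(N:ℤ)) (N:ℤ) with hT
  have hTne : T.Nonempty := ⟨0, by simp [hT]⟩
  set ε₀ : ℝ := T.inf' hTne (fun E => Complex.abs (1 - u * q ^ E)) with hε₀
  have hε₀pos : 0 < ε₀ := by
    rw [hε₀, Finset.lt_inf'_iff]
    intro E _; exact hpos E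
  refine ⟨min (min ε₀ (1/2)) 1, ?_, ?_, ?_⟩
  · positivity
  · exact min_le_right _ _
  · intro E
    rcases le_or_gt E (N:ℤ) with hE1 | hE1
    · rcases le_or_gt (-(N:ℤ)) E with hE2 | hE2
      · -- middle
        have : ε₀ ≤ Complex.abs (1 - u * q ^ E) :=
          Finset.inf'_le _ (Finset.mem_Icc.mpr ⟨hE2, hE1⟩)
        calc min (min ε₀ (1/2)) 1 ≤ min ε₀ (1/2) := min_le_left _ _
          _ ≤ ε₀ := min_le_left _ _
          _ ≤ _ := this
      · -- small: E < -N, |u q^E| ≤ |u| ρ^{-N-1} ≤ 1/2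
        have habs : Complex.abs (u * q ^ E) ≤ 1/2 := by
          rw [map_mul, map_zpow₀]
          have h1 : ρ ^ E ≤ ρ ^ (-(N:ℤ) - 1) :=
            zpow_le_zpow_right₀ (le_of_lt hρ) (by omega)
          have h2 : ρ ^ (-(N:ℤ) - 1) ≤ ρ ^ (-(N:ℤ)) :=
            zpow_le_zpow_right₀ (le_of_lt hρ) (by omega)
          have h3 : ρ ^ (-(N:ℤ)) = (ρ ^ N)⁻¹ := by
            rw [zpow_neg, zpow_natCast]
          have h4 : Complex.abs u * ρ ^ E ≤ Complex.abs u * (ρ ^ N)⁻¹ := by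
            apply mul_le_mul_of_nonneg_left _ (le_of_lt hau)
            rw [← h3]; exact le_trans h1 h2
          have h5 : Complex.abs u * (ρ ^ N)⁻¹ ≤ 1/2 := by
            rw [mul_inv_le_iff₀ (by positivity)]
            linarith
          linarith
        have hd : |Complex.abs 1 - Complex.abs (u * q ^ E)| ≤ Complex.abs (1 - u * q ^ E) :=
          Complex.abs.abs_abv_sub_le_abv_sub _ _
        rw [map_one] at hd
        have : (1:ℝ)/2 ≤ Complex.abs (1 - u * q ^ E) := by
          have h2 := le_abs_self (1 - Complex.abs (u * q ^ E))
          linarith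
        calc min (min ε₀ (1/2)) 1 ≤ min ε₀ (1/2) := min_le_left _ _
          _ ≤ 1/2 := min_le_right _ _
          _ ≤ _ := this
    · -- large: E > N, |u q^E| ≥ 2
      have habs : 2 ≤ Complex.abs (u * q ^ E) := by
        rw [map_mul, map_zpow₀]
        have h1 : ρ ^ ((N:ℤ)+1) ≤ ρ ^ E :=
          zpow_le_zpow_right₀ (le_of_lt hρ) (by omega)
        have h2 : ρ ^ (N:ℤ) ≤ ρ ^ ((N:ℤ)+1) :=
          zpow_le_zpow_right₀ (le_of_lt hρ) (by omega)
        have h3 : (ρ:ℝ) ^ (N:ℤ) = ρ ^ N := zpow_natCast ρ N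
        have h4 : 2 / Complex.abs u ≤ ρ ^ E := by
          rw [← h3] at hN1
          linarith
        rw [div_le_iff₀ hau] at h4
        calc (2:ℝ) ≤ ρ ^ E * Complex.abs u := h4
          _ = Complex.abs u * ρ ^ E := by ring
      have hd : |Complex.abs 1 - Complex.abs (u * q ^ E)| ≤ Complex.abs (1 - u * q ^ E) :=
        Complex.abs.abs_abv_sub_le_abv_sub _ _
      rw [map_one] at hd
      have h1 : (1:ℝ) ≤ Complex.abs (1 - u * q ^ E) := by
        have := le_abs_self (Complex.abs (u * q ^ E) - 1)
        have h2 : |1 - Complex.abs (u * q ^ E)| = |Complex.abs (u * q ^ E) - 1| := abs_sub_comm _ _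
        rw [h2] at hd
        linarith
      calc min (min ε₀ (1/2)) 1 ≤ 1 := min_le_right _ _
        _ ≤ _ := h1


/-- uniform lower bound, general case `|q| ≠ 1`. -/
lemma unif_gen (q u : ℂ) (hq0 : q ≠ 0) (hρ : Complex.abs q ≠ 1) (hu0 : u ≠ 0)
    (hu : ∀ k : ℤ, u ≠ q ^ k) :
    ∃ ε : ℝ, 0 < ε ∧ ε ≤ 1 ∧ ∀ E : ℤ, ε ≤ Complex.abs (1 - u * q ^ E) := by
  rcases lt_or_gt_of_ne hρ with h1 | h1
  · -- |q| < 1 : use q⁻¹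
    have hq' : 1 < Complex.abs q⁻¹ := by
      rw [map_inv₀]
      rw [lt_inv_comm₀] <;> simp [Complex.abs.pos_iff.mpr hq0, h1]
    have hu' : ∀ k : ℤ, u ≠ q⁻¹ ^ k := by
      intro k hk
      apply hu (-k)
      rw [hk, inv_zpow, ← zpow_neg]
    obtain ⟨ε, hε1, hε2, hε3⟩ := unif_core q⁻¹ u hq' hu0 hu'
    refine ⟨ε, hε1, hε2, fun E => ?_⟩
    have := hε3 (-E)
    rwa [inv_zpow, ← zpow_neg, neg_neg] at this
  · exact unif_core q u h1 hu0 hu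

/-- diagonal double-factor bound.
`σ = max |q| |q|⁻¹`, `δ = 1 - σ⁻¹`. Both `K₁, K₂ ≥ c ≥ 1`. -/
lemma diag_core (q : ℂ) (hρ : 1 < Complex.abs q) (K₁ K₂ : ℕ) (hK₁ : 1 ≤ K₁) (hK₂ : 1 ≤ K₂)
    (c : ℕ) (hc2 : c ≤ K₂) :
    (1 - (Complex.abs q)⁻¹) ^ 2 * Complex.abs q ^ c
      ≤ Complex.abs (1 - q ^ (-(K₁:ℤ))) * Complex.abs (1 - q ^ ((K₂:ℤ))) := by
  set ρ := Complex.abs q with hρdef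
  have hρ0 : (0:ℝ) < ρ := lt_trans zero_lt_one hρ
  have hδ : 0 < 1 - ρ⁻¹ := by
    rw [sub_pos, inv_lt_one_iff₀]; right; exact hρ
  -- first factor: ≥ 1 - ρ⁻¹
  have hf1 : 1 - ρ⁻¹ ≤ Complex.abs (1 - q ^ (-(K₁:ℤ))) := by
    have hd : |Complex.abs 1 - Complex.abs (q ^ (-(K₁:ℤ)))| ≤ Complex.abs (1 - q ^ (-(K₁:ℤ))) :=
      Complex.abs.abs_abv_sub_le_abv_sub _ _
    rw [map_one, map_zpow₀] at hd
    have h1 : ρ ^ (-(K₁:ℤ)) ≤ ρ ^ (-1:ℤ) :=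
      zpow_le_zpow_right₀ (le_of_lt hρ) (by omega)
    have h2 : (ρ:ℝ) ^ (-1:ℤ) = ρ⁻¹ := by simp
    have h3 := le_abs_self (1 - ρ ^ (-(K₁:ℤ)))
    linarith
  -- second factor: ≥ ρ^{K₂} - ρ^{K₂ - 1} ≥ (1-ρ⁻¹) ρ^c
  have hf2 : (1 - ρ⁻¹) * ρ ^ c ≤ Complex.abs (1 - q ^ ((K₂:ℤ))) := by
    have hd : |Complex.abs 1 - Complex.abs (q ^ ((K₂:ℤ)))| ≤ Complex.abs (1 - q ^ ((K₂:ℤ))) :=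
      Complex.abs.abs_abv_sub_le_abv_sub _ _
    rw [map_one, map_zpow₀] at hd
    have h3 := le_abs_self (ρ ^ ((K₂:ℤ)) - 1)
    rw [abs_sub_comm] at hd
    have h4 : ρ ^ ((K₂:ℤ)) = ρ ^ K₂ := zpow_natCast ρ K₂
    have h5 : (1 - ρ⁻¹) * ρ ^ c ≤ ρ ^ K₂ - 1 := by
      have e1 : (1 - ρ⁻¹) * ρ ^ c = ρ ^ c - ρ ^ c * ρ⁻¹ := by ring
      have e2 : ρ ^ c ≤ ρ ^ K₂ := pow_le_pow_right₀ (le_of_lt hρ) hc2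
      have e3 : 1 ≤ ρ ^ c * ρ⁻¹ + 1 - 1 + 1 := by
        have : ρ ^ c * ρ⁻¹ ≥ 0 := by positivity
        linarith
      -- 1 - ρ⁻¹ ≤ 1 and ρ^c ≤ ρ^K₂ gives (1-ρ⁻¹)ρ^c ≤ ρ^K₂ - ρ^K₂ ρ⁻¹,
      -- and ρ^K₂ ρ⁻¹ = ρ^{K₂-1} ≥ 1.
      have e4 : (1 - ρ⁻¹) * ρ ^ c ≤ (1 - ρ⁻¹) * ρ ^ K₂ :=
        mul_le_mul_of_nonneg_left e2 (le_of_lt hδ)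
      have e5 : ρ ^ K₂ * ρ⁻¹ = ρ ^ (K₂ - 1) := by
        conv_lhs => rw [← pow_sub_one_mul (by omega : K₂ ≠ 0) ρ]
        rw [mul_assoc, mul_inv_cancel₀ (ne_of_gt hρ0), mul_one]
      have e6 : (1:ℝ) ≤ ρ ^ (K₂ - 1) := one_le_pow₀ (le_of_lt hρ)
      nlinarith
    rw [h4] at h3 hd
    linarith
  calc (1 - ρ⁻¹) ^ 2 * ρ ^ c = (1 - ρ⁻¹) * ((1 - ρ⁻¹) * ρ ^ c) := by ring
    _ ≤ Complex.abs (1 - q ^ (-(K₁:ℤ))) * ((1 - ρ⁻¹) * ρ ^ c) := by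
        apply mul_le_mul_of_nonneg_right hf1 (by positivity)
    _ ≤ Complex.abs (1 - q ^ (-(K₁:ℤ))) * Complex.abs (1 - q ^ ((K₂:ℤ))) := by
        apply mul_le_mul_of_nonneg_left hf2 (Complex.abs.nonneg _)


/-- general diagonal bound with `σ = max |q| |q|⁻¹`. -/
lemma diag_gen (q : ℂ) (hq0 : q ≠ 0) (hρ : Complex.abs q ≠ 1)
    (K₁ K₂ c : ℕ) (hK₁ : 1 ≤ K₁) (hK₂ : 1 ≤ K₂) (hc1 : c ≤ K₁) (hc2 : c ≤ K₂) :
    (1 - (max (Complex.abs q) (Complex.abs q)⁻¹)⁻¹) ^ 2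
        * (max (Complex.abs q) (Complex.abs q)⁻¹) ^ c
      ≤ Complex.abs (1 - q ^ (-(K₁:ℤ))) * Complex.abs (1 - q ^ ((K₂:ℤ))) := by
  have hρ0 : 0 < Complex.abs q := Complex.abs.pos_iff.mpr hq0
  rcases lt_or_gt_of_ne hρ with h1 | h1
  · -- |q| < 1
    have hmax : max (Complex.abs q) (Complex.abs q)⁻¹ = (Complex.abs q)⁻¹ := by
      apply max_eq_right
      have : 1 < (Complex.abs q)⁻¹ := (one_lt_inv₀ hρ0).mpr h1
      linarith
    rw [hmax]
    have hq' : 1 < Complex.abs q⁻¹ := by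
      rw [map_inv₀]
      exact (one_lt_inv₀ hρ0).mpr h1
    have hcore := diag_core q⁻¹ hq' K₂ K₁ hK₂ hK₁ c hc1
    rw [map_inv₀] at hcore
    have e1 : (q⁻¹) ^ (-(K₂:ℤ)) = q ^ ((K₂:ℤ)) := by
      rw [inv_zpow, ← zpow_neg, neg_neg]
    have e2 : (q⁻¹) ^ ((K₁:ℤ)) = q ^ (-(K₁:ℤ)) := by
      rw [inv_zpow, ← zpow_neg]
    rw [e1, e2] at hcore
    calc (1 - ((Complex.abs q)⁻¹)⁻¹) ^ 2 * ((Complex.abs q)⁻¹) ^ c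
        ≤ Complex.abs (1 - q ^ ((K₂:ℤ))) * Complex.abs (1 - q ^ (-(K₁:ℤ))) := hcore
      _ = Complex.abs (1 - q ^ (-(K₁:ℤ))) * Complex.abs (1 - q ^ ((K₂:ℤ))) := mul_comm _ _
  · -- 1 < |q|
    have hmax : max (Complex.abs q) (Complex.abs q)⁻¹ = Complex.abs q := by
      apply max_eq_left
      have : (Complex.abs q)⁻¹ < 1 := by
        rw [inv_lt_one_iff₀]; right; exact h1
      linarith
    rw [hmax]
    exact diag_core q h1 K₁ K₂ hK₁ hK₂ c hc2


/-- rewrite a generic factor as `1 - v q^E`. -/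
lemma factor_eq (q v : ℂ) (hq0 : q ≠ 0) (w₁ w₂ : ℤ) (x y : ℤ) :
    1 - v * (q ^ x) ^ w₂ * (q ^ y) ^ w₁ = 1 - v * q ^ (x * w₂ + y * w₁) := by
  rw [← zpow_mul, ← zpow_mul, mul_assoc, ← zpow_add₀ hq0]

/-- cross bound. -/
lemma cross_N_bound (q v : ℂ) (hq0 : q ≠ 0) (m n : ℕ) (lam mu : YoungDiagram)
    (ε : ℝ) (hε0 : 0 ≤ ε) (hε : ∀ E : ℤ, ε ≤ Complex.abs (1 - v * q ^ E)) :
    ε ^ (lam.card + mu.card)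
      ≤ Complex.abs (nekrasovFactor v (q ^ (-(m:ℤ))) (q ^ (n:ℤ)) lam mu) := by
  rw [nekrasovFactor, map_mul, map_prod, map_prod, pow_add]
  have h1 : ε ^ lam.card
      ≤ ∏ s ∈ lam.cells, Complex.abs (1 - v * (q ^ ((n:ℤ))) ^ (-armZ mu s - 1)
          * (q ^ (-(m:ℤ))) ^ (legZ lam s)) := by
    rw [← Finset.prod_const]
    apply Finset.prod_le_prod (fun _ _ => hε0)
    intro s _
    rw [factor_eq q v hq0 _ _ _ _]
    exact hε _
  have h2 : ε ^ mu.card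
      ≤ ∏ s ∈ mu.cells, Complex.abs (1 - v * (q ^ ((n:ℤ))) ^ (armZ lam s)
          * (q ^ (-(m:ℤ))) ^ (-legZ mu s - 1)) := by
    rw [← Finset.prod_const]
    apply Finset.prod_le_prod (fun _ _ => hε0)
    intro s _
    rw [factor_eq q v hq0 _ _ _ _]
    exact hε _
  have p1 : (0:ℝ) ≤ ε ^ mu.card := by positivity
  calc ε ^ lam.card * ε ^ mu.card
      ≤ (∏ s ∈ lam.cells, Complex.abs (1 - v * (q ^ ((n:ℤ))) ^ (-armZ mu s - 1)
          * (q ^ (-(m:ℤ))) ^ (legZ lam s))) * ε ^ mu.card := by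
        apply mul_le_mul_of_nonneg_right h1 p1
    _ ≤ _ := by
        apply mul_le_mul_of_nonneg_left h2 (Finset.prod_nonneg fun _ _ => Complex.abs.nonneg _)

/-- diagonal bound. -/
lemma diag_N_bound (q : ℂ) (hq0 : q ≠ 0) (hρ : Complex.abs q ≠ 1)
    (m n : ℕ) (hm : 1 ≤ m) (hn : 1 ≤ n) (lam : YoungDiagram) :
    ((1 - (max (Complex.abs q) (Complex.abs q)⁻¹)⁻¹) ^ 2) ^ lam.card
        * (max (Complex.abs q) (Complex.abs q)⁻¹) ^ (min m n * hookSum lam)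
      ≤ Complex.abs (nekrasovFactor 1 (q ^ (-(m:ℤ))) (q ^ (n:ℤ)) lam lam) := by
  set σ := max (Complex.abs q) (Complex.abs q)⁻¹ with hσ
  set δ2 := (1 - σ⁻¹) ^ 2 with hδ2
  rw [nekrasovFactor, map_mul, map_prod, map_prod, ← Finset.prod_mul_distrib]
  have key : ∀ s ∈ lam.cells,
      δ2 * σ ^ (min m n * hookN lam s)
        ≤ Complex.abs (1 - 1 * (q ^ ((n:ℤ))) ^ (-armZ lam s - 1)
            * (q ^ (-(m:ℤ))) ^ (legZ lam s))
          * Complex.abs (1 - 1 * (q ^ ((n:ℤ))) ^ (armZ lam s)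
            * (q ^ (-(m:ℤ))) ^ (-legZ lam s - 1)) := by
    intro s hs
    have hrow : s.2 < lam.rowLen s.1 := by
      rw [← YoungDiagram.mem_iff_lt_rowLen]; exact (YoungDiagram.mem_cells _).mp hs
    have hcol : s.1 < lam.colLen s.2 := by
      rw [← YoungDiagram.mem_iff_lt_colLen]
      rcases s with ⟨i, j⟩; exact (YoungDiagram.mem_cells _).mp hs
    set a : ℕ := lam.rowLen s.1 - s.2 - 1 with hadef
    set l : ℕ := lam.colLen s.2 - s.1 - 1 with hldef
    have ha : armZ lam s = (a : ℤ) := by unfold armZ; push_cast; omega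
    have hl : legZ lam s = (l : ℤ) := by unfold legZ; push_cast; omega
    have hhook : hookN lam s = a + l + 1 := by unfold hookN; omega
    set K₁ : ℕ := n * (a + 1) + m * l with hK₁def
    set K₂ : ℕ := n * a + m * (l + 1) with hK₂def
    have e1 : 1 - 1 * (q ^ ((n:ℤ))) ^ (-armZ lam s - 1) * (q ^ (-(m:ℤ))) ^ (legZ lam s)
        = 1 - 1 * q ^ (-(K₁:ℤ)) := by
      rw [factor_eq q 1 hq0]
      congr 2
      rw [ha, hl, hK₁def]
      push_cast; ring
    have e2 : 1 - 1 * (q ^ ((n:ℤ))) ^ (armZ lam s) * (q ^ (-(m:ℤ))) ^ (-legZ lam s - 1)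
        = 1 - 1 * q ^ ((K₂:ℤ)) := by
      rw [factor_eq q 1 hq0]
      congr 2
      rw [ha, hl, hK₂def]
      push_cast; ring
    rw [e1, e2, one_mul, one_mul]
    have hc1 : min m n * hookN lam s ≤ K₁ := by
      have h1 := Nat.min_le_left m n
      have h2 := Nat.min_le_right m n
      rw [hhook, hK₁def]
      nlinarith
    have hc2 : min m n * hookN lam s ≤ K₂ := by
      have h1 := Nat.min_le_left m n
      have h2 := Nat.min_le_right m n
      rw [hhook, hK₂def]
      nlinarith
    exact diag_gen q hq0 hρ K₁ K₂ (min m n * hookN lam s)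
      (by rw [hK₁def]; nlinarith) (by rw [hK₂def]; nlinarith) hc1 hc2
  calc δ2 ^ lam.card * σ ^ (min m n * hookSum lam)
      = ∏ s ∈ lam.cells, (δ2 * σ ^ (min m n * hookN lam s)) := by
        rw [Finset.prod_mul_distrib, Finset.prod_const, Finset.prod_pow_eq_pow_sum]
        rw [YoungDiagram.card, ← Finset.mul_sum]
        rfl
    _ ≤ _ := by
        apply Finset.prod_le_prod
        · intro s _
          have hδ0 : (0:ℝ) ≤ δ2 := by rw [hδ2]; positivity
          positivity
        · exact key


/-- the main constant. -/
noncomputable def Cmain (q : ℂ) (m n : ℕ) (ε : ℝ) : ℝ :=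
  (max (Complex.abs q) (Complex.abs q)⁻¹) ^ (m + n)
    * (216 * (max 1 (((min m n : ℕ) : ℝ)
        * Real.log (max (Complex.abs q) (Complex.abs q)⁻¹))⁻¹) ^ 3)
    / ((1 - (max (Complex.abs q) (Complex.abs q)⁻¹)⁻¹) ^ 2 * ε ^ 2)

lemma sigma_gt_one {q : ℂ} (hq0 : q ≠ 0) (hρ : Complex.abs q ≠ 1) :
    1 < max (Complex.abs q) (Complex.abs q)⁻¹ := by
  have hρ0 : 0 < Complex.abs q := Complex.abs.pos_iff.mpr hq0
  rcases lt_or_gt_of_ne hρ with h | h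
  · exact lt_max_of_lt_right ((one_lt_inv₀ hρ0).mpr h)
  · exact lt_max_of_lt_left h

lemma delta2_pos {q : ℂ} (hq0 : q ≠ 0) (hρ : Complex.abs q ≠ 1) :
    0 < (1 - (max (Complex.abs q) (Complex.abs q)⁻¹)⁻¹) ^ 2 := by
  have h := sigma_gt_one hq0 hρ
  have : (max (Complex.abs q) (Complex.abs q)⁻¹)⁻¹ < 1 := by
    rw [inv_lt_one_iff₀]; right; exact h
  have h2 : 0 < 1 - (max (Complex.abs q) (Complex.abs q)⁻¹)⁻¹ := by linarith
  positivity

lemma Cmain_pos {q : ℂ} (hq0 : q ≠ 0) (hρ : Complex.abs q ≠ 1)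
    {m n : ℕ} {ε : ℝ} (hε : 0 < ε) : 0 < Cmain q m n ε := by
  have h1 := sigma_gt_one hq0 hρ
  have h2 := delta2_pos hq0 hρ
  have h3 : (0:ℝ) < max (Complex.abs q) (Complex.abs q)⁻¹ := by linarith
  unfold Cmain
  positivity

lemma zpow_sub_le {ρ σ : ℝ} (hρ0 : 0 < ρ) (hσρ : ρ ≤ σ) (hσρ' : ρ⁻¹ ≤ σ)
    (hσ1 : 1 ≤ σ) (m n : ℕ) : ρ ^ ((m:ℤ) - (n:ℤ)) ≤ σ ^ (m + n) := by
  rcases le_total n m with h | h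
  · have e : (m:ℤ) - (n:ℤ) = ((m - n : ℕ) : ℤ) := by push_cast; omega
    rw [e, zpow_natCast]
    calc ρ ^ (m - n) ≤ σ ^ (m - n) := pow_le_pow_left₀ (le_of_lt hρ0) hσρ _
      _ ≤ σ ^ (m + n) := pow_le_pow_right₀ hσ1 (by omega)
  · have e : (m:ℤ) - (n:ℤ) = -(((n - m : ℕ) : ℤ)) := by push_cast; omega
    rw [e, zpow_neg, zpow_natCast, ← inv_pow]
    calc (ρ⁻¹) ^ (n - m) ≤ σ ^ (n - m) := pow_le_pow_left₀ (by positivity) hσρ' _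
      _ ≤ σ ^ (m + n) := pow_le_pow_right₀ hσ1 (by omega)

/-- THE per-term bound. -/
lemma term_le (q u : ℂ) (m n : ℕ) (hq0 : q ≠ 0) (hρ : Complex.abs q ≠ 1)
    (hm : 1 ≤ m) (hn : 1 ≤ n)
    (ε : ℝ) (hε0 : 0 < ε)
    (hεu : ∀ E : ℤ, ε ≤ Complex.abs (1 - u * q ^ E))
    (hεu' : ∀ E : ℤ, ε ≤ Complex.abs (1 - u⁻¹ * q ^ E))
    (z : ℂ) (P : YoungDiagram × YoungDiagram) :
    Complex.abs (zInstTerm u q z m n P) ≤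
      (Cmain q m n ε * Complex.abs z) ^ P.1.card / (Nat.factorial P.1.card : ℝ)
        * ((Cmain q m n ε * Complex.abs z) ^ P.2.card / (Nat.factorial P.2.card : ℝ)) := by
  set ρ := Complex.abs q with hρdef
  have hρ0 : 0 < ρ := Complex.abs.pos_iff.mpr hq0
  set σ := max ρ ρ⁻¹ with hσdef
  have hσ1 : 1 < σ := sigma_gt_one hq0 hρ
  have hσ0 : (0:ℝ) < σ := by linarith
  set δ2 := (1 - σ⁻¹) ^ 2 with hδ2def
  have hδ2 : 0 < δ2 := delta2_pos hq0 hρ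
  set c := min m n with hcdef
  have hc1 : 1 ≤ c := le_min hm hn
  set C₀ := 216 * (max 1 ((c : ℝ) * Real.log σ)⁻¹) ^ 3 with hC₀def
  have hC₀ : 0 < C₀ := by positivity
  set D := δ2 * ε ^ 2 with hDdef
  have hD : 0 < D := by positivity
  set k₁ := P.1.card with hk₁
  set k₂ := P.2.card with hk₂
  set H₁ := hookSum P.1 with hH₁
  set H₂ := hookSum P.2 with hH₂
  set A := σ ^ (m + n) * Complex.abs z with hAdef
  have hA0 : 0 ≤ A := by positivity
  have hCmain : Cmain q m n ε = σ ^ (m+n) * C₀ / D := rfl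
  -- numerator bound
  have hnum : Complex.abs ((q ^ ((m:ℤ) - (n:ℤ)) * z) ^ (k₁ + k₂)) ≤ A ^ (k₁ + k₂) := by
    rw [map_pow, map_mul, map_zpow₀]
    apply pow_le_pow_left₀ (by positivity)
    apply mul_le_mul_of_nonneg_right _ (Complex.abs.nonneg z)
    exact zpow_sub_le hρ0 (le_max_left _ _) (le_max_right _ _) (le_of_lt hσ1) m n
  -- denominator bound
  have hd11 := diag_N_bound q hq0 hρ m n hm hn P.1
  have hd22 := diag_N_bound q hq0 hρ m n hm hn P.2
  have hd12 := cross_N_bound q u hq0 m n P.1 P.2 ε (le_of_lt hε0) hεu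
  have hd21 := cross_N_bound q u⁻¹ hq0 m n P.2 P.1 ε (le_of_lt hε0) hεu'
  set N11 := nekrasovFactor 1 (q ^ (-(m:ℤ))) (q ^ ((n:ℤ))) P.1 P.1
  set N12 := nekrasovFactor u (q ^ (-(m:ℤ))) (q ^ ((n:ℤ))) P.1 P.2
  set N21 := nekrasovFactor u⁻¹ (q ^ (-(m:ℤ))) (q ^ ((n:ℤ))) P.2 P.1
  set N22 := nekrasovFactor 1 (q ^ (-(m:ℤ))) (q ^ ((n:ℤ))) P.2 P.2
  set LB : ℝ := (δ2 ^ k₁ * σ ^ (c * H₁)) * (ε ^ (k₁ + k₂)) * (ε ^ (k₂ + k₁))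
      * (δ2 ^ k₂ * σ ^ (c * H₂)) with hLBdef
  have hLBpos : 0 < LB := by positivity
  have hden : LB ≤ Complex.abs (N11 * N12 * N21 * N22) := by
    rw [map_mul, map_mul, map_mul]
    have p12 : (0:ℝ) ≤ ε ^ (k₁ + k₂) := by positivity
    have p21 : (0:ℝ) ≤ ε ^ (k₂ + k₁) := by positivity
    have p11 : (0:ℝ) ≤ δ2 ^ k₁ * σ ^ (c * H₁) := by positivity
    have p22 : (0:ℝ) ≤ δ2 ^ k₂ * σ ^ (c * H₂) := by positivity
    have h1 : δ2 ^ k₁ * σ ^ (c * H₁) * ε ^ (k₁ + k₂)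
        ≤ Complex.abs N11 * Complex.abs N12 :=
      mul_le_mul hd11 hd12 p12 (Complex.abs.nonneg _)
    have h2 : ε ^ (k₂ + k₁) * (δ2 ^ k₂ * σ ^ (c * H₂))
        ≤ Complex.abs N21 * Complex.abs N22 :=
      mul_le_mul hd21 hd22 p22 (Complex.abs.nonneg _)
    calc LB = (δ2 ^ k₁ * σ ^ (c * H₁) * ε ^ (k₁ + k₂))
          * (ε ^ (k₂ + k₁) * (δ2 ^ k₂ * σ ^ (c * H₂))) := by rw [hLBdef]; ring
      _ ≤ (Complex.abs N11 * Complex.abs N12) * (Complex.abs N21 * Complex.abs N22) := by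
          apply mul_le_mul h1 h2 (by positivity) (by positivity)
      _ = Complex.abs N11 * Complex.abs N12 * Complex.abs N21 * Complex.abs N22 := by ring
  -- term ≤ A^(k₁+k₂) / LB
  have hstep1 : Complex.abs (zInstTerm u q z m n P) ≤ A ^ (k₁ + k₂) / LB := by
    rw [zInstTerm, map_div₀]
    exact div_le_div₀ (by positivity) hnum hLBpos hden
  -- split into per-diagram pieces
  have hLBsplit : LB = (D ^ k₁ * σ ^ (c * H₁)) * (D ^ k₂ * σ ^ (c * H₂)) := by
    rw [hLBdef, hDdef]
    rw [mul_pow, mul_pow, pow_add, pow_add, ← pow_mul, ← pow_mul]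
    ring
  have hsplit : A ^ (k₁ + k₂) / LB
      = (A ^ k₁ / (D ^ k₁ * σ ^ (c * H₁))) * (A ^ k₂ / (D ^ k₂ * σ ^ (c * H₂))) := by
    rw [hLBsplit, pow_add]
    field_simp
  rw [hsplit] at hstep1
  -- per-diagram: A^k / (D^k σ^(cH)) ≤ (Cmain |z|)^k / k!
  have hper : ∀ (k H : ℕ), k ^ 4 ≤ 8 * H ^ 3 →
      A ^ k / (D ^ k * σ ^ (c * H))
        ≤ (Cmain q m n ε * Complex.abs z) ^ k / (Nat.factorial k : ℝ) := by
    intro k H hkey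
    have hfact : (Nat.factorial k : ℝ) ≤ C₀ ^ k * σ ^ (c * H) :=
      factorial_le_pow_hook σ hσ1 c hc1 H k hkey
    have hfk : (0:ℝ) < (Nat.factorial k : ℝ) := by
      exact_mod_cast Nat.factorial_pos k
    rw [div_le_div_iff₀ (by positivity) hfk]
    have e : (Cmain q m n ε * Complex.abs z) ^ k * (D ^ k * σ ^ (c * H))
        = A ^ k * (C₀ ^ k * σ ^ (c * H)) := by
      rw [hCmain, hAdef]
      field_simp [hD.ne']
      rw [← mul_pow, div_mul_cancel₀ _ hD.ne']
      ring
    rw [e]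
    exact mul_le_mul_of_nonneg_left hfact (by positivity)
  have hb1 := hper k₁ H₁ (key3 P.1)
  have hb2 := hper k₂ H₂ (key3 P.2)
  calc Complex.abs (zInstTerm u q z m n P)
      ≤ (A ^ k₁ / (D ^ k₁ * σ ^ (c * H₁))) * (A ^ k₂ / (D ^ k₂ * σ ^ (c * H₂))) := hstep1
    _ ≤ (Cmain q m n ε * Complex.abs z) ^ k₁ / (Nat.factorial k₁ : ℝ)
        * ((Cmain q m n ε * Complex.abs z) ^ k₂ / (Nat.factorial k₂ : ℝ)) := by
        have n1 : (0:ℝ) ≤ A ^ k₂ / (D ^ k₂ * σ ^ (c * H₂)) :=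
          div_nonneg (pow_nonneg hA0 _) (by positivity)
        have n2 : (0:ℝ) ≤ (Cmain q m n ε * Complex.abs z) ^ k₁ / (Nat.factorial k₁ : ℝ) :=
          div_nonneg (pow_nonneg (mul_nonneg (le_of_lt (Cmain_pos hq0 hρ hε0))
            (Complex.abs.nonneg z)) _) (Nat.cast_nonneg _)
        exact mul_le_mul hb1 hb2 n1 n2

end ZInstAux

open ZInstAux in
/-- For `|q| ≠ 1`, positive integers `m, n`, and `u ≠ 0` with `u ≠ q^k`
for all integers `k`, the instanton sum `Z_inst(u; q^{-m}, q^{n} | z)` converges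
absolutely for every `z ∈ ℂ` and is bounded by `exp(C|z|)` for a constant `C`
depending only on `q, m, n, u`. -/
theorem zInst_converges (q u : ℂ) (m n : ℕ) (hm : 1 ≤ m) (hn : 1 ≤ n)
    (hq : ‖q‖ ≠ 1) (hq0 : q ≠ 0) (hu0 : u ≠ 0)
    (hu : ∀ k : ℤ, u ≠ q ^ k) :
    (∀ z : ℂ, Summable fun P : YoungDiagram × YoungDiagram =>
        ‖zInstTerm u q z m n P‖) ∧
      ∃ C : ℝ, 0 < C ∧ ∀ z : ℂ,
        ‖∑' P : YoungDiagram × YoungDiagram, zInstTerm u q z m n P‖ ≤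
          Real.exp (C * ‖z‖) := by
  classical
  simp only [Complex.norm_eq_abs] at hq ⊢
  obtain ⟨ε₁, hε₁pos, hε₁le, hε₁⟩ := unif_gen q u hq0 hq hu0 hu
  have hu0' : u⁻¹ ≠ 0 := inv_ne_zero hu0
  have hu' : ∀ k : ℤ, u⁻¹ ≠ q ^ k := by
    intro k hk
    apply hu (-k)
    have : u = (q ^ k)⁻¹ := by rw [← hk, inv_inv]
    rwa [← zpow_neg] at this
  obtain ⟨ε₂, hε₂pos, hε₂le, hε₂⟩ := unif_gen q u⁻¹ hq0 hq hu0' hu'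
  set ε := min ε₁ ε₂ with hεdef
  have hεpos : 0 < ε := lt_min hε₁pos hε₂pos
  have hεu : ∀ E : ℤ, ε ≤ Complex.abs (1 - u * q ^ E) :=
    fun E => le_trans (min_le_left _ _) (hε₁ E)
  have hεu' : ∀ E : ℤ, ε ≤ Complex.abs (1 - u⁻¹ * q ^ E) :=
    fun E => le_trans (min_le_right _ _) (hε₂ E)
  set C₁ := Cmain q m n ε with hC₁def
  have hC₁pos : 0 < C₁ := Cmain_pos hq0 hq hεpos
  have hterm := term_le q u m n hq0 hq hm hn ε hεpos hεu hεu'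
  -- finite sum bound
  have hsum : ∀ z : ℂ, ∀ U : Finset (YoungDiagram × YoungDiagram),
      ∑ P ∈ U, Complex.abs (zInstTerm u q z m n P)
        ≤ Real.exp (4 * C₁ * Complex.abs z) := by
    intro z U
    set x := C₁ * Complex.abs z with hx
    have hx0 : 0 ≤ x := by positivity
    set Φ : YoungDiagram → ℝ :=
      fun lam => x ^ lam.card / (Nat.factorial lam.card : ℝ) with hΦ
    have hΦ0 : ∀ lam, 0 ≤ Φ lam := by
      intro lam; rw [hΦ]; positivity
    have h1 : ∑ P ∈ U, Complex.abs (zInstTerm u q z m n P)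
        ≤ ∑ P ∈ U, Φ P.1 * Φ P.2 :=
      Finset.sum_le_sum fun P _ => hterm z P
    have h2 : ∑ P ∈ U, Φ P.1 * Φ P.2
        ≤ ∑ P ∈ (U.image Prod.fst) ×ˢ (U.image Prod.snd), Φ P.1 * Φ P.2 := by
      apply Finset.sum_le_sum_of_subset_of_nonneg
      · intro P hP
        rw [Finset.mem_product]
        exact ⟨Finset.mem_image_of_mem _ hP, Finset.mem_image_of_mem _ hP⟩
      · intro P _ _
        exact mul_nonneg (hΦ0 _) (hΦ0 _)
    have h3 : ∑ P ∈ (U.image Prod.fst) ×ˢ (U.image Prod.snd), Φ P.1 * Φ P.2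
        = (∑ lam ∈ U.image Prod.fst, Φ lam) * (∑ mu ∈ U.image Prod.snd, Φ mu) := by
      rw [Finset.sum_product, ← Finset.sum_mul_sum]
    have h4 : (∑ lam ∈ U.image Prod.fst, Φ lam) ≤ Real.exp (2 * x) :=
      sum_phi_le _ x hx0
    have h5 : (∑ mu ∈ U.image Prod.snd, Φ mu) ≤ Real.exp (2 * x) :=
      sum_phi_le _ x hx0
    have h6 : (∑ lam ∈ U.image Prod.fst, Φ lam) * (∑ mu ∈ U.image Prod.snd, Φ mu)
        ≤ Real.exp (2 * x) * Real.exp (2 * x) := by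
      apply mul_le_mul h4 h5 (Finset.sum_nonneg fun _ _ => hΦ0 _) (le_of_lt (Real.exp_pos _))
    have h7 : Real.exp (2 * x) * Real.exp (2 * x) = Real.exp (4 * C₁ * Complex.abs z) := by
      rw [← Real.exp_add, hx]
      ring_nf
    linarith [h1, h2, h3 ▸ h2, h6]
  have hsummable : ∀ z : ℂ, Summable fun P : YoungDiagram × YoungDiagram =>
      Complex.abs (zInstTerm u q z m n P) := by
    intro z
    exact summable_of_sum_le (fun P => Complex.abs.nonneg _) (hsum z)
  refine ⟨hsummable, 4 * C₁, by positivity, fun z => ?_⟩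
  have habs : Complex.abs (∑' P : YoungDiagram × YoungDiagram, zInstTerm u q z m n P)
      ≤ ∑' P : YoungDiagram × YoungDiagram, Complex.abs (zInstTerm u q z m n P) := by
    rw [← Complex.norm_eq_abs]
    have : (fun P : YoungDiagram × YoungDiagram => Complex.abs (zInstTerm u q z m n P))
        = fun P => ‖zInstTerm u q z m n P‖ := by
      funext P; rw [Complex.norm_eq_abs]
    calc ‖∑' P : YoungDiagram × YoungDiagram, zInstTerm u q z m n P‖
        ≤ ∑' P : YoungDiagram × YoungDiagram, ‖zInstTerm u q z m n P‖ :=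
          norm_tsum_le_tsum_norm (by rw [← this]; exact hsummable z)
      _ = _ := by rw [← this]
  calc Complex.abs (∑' P : YoungDiagram × YoungDiagram, zInstTerm u q z m n P)
      ≤ ∑' P : YoungDiagram × YoungDiagram, Complex.abs (zInstTerm u q z m n P) := habs
    _ ≤ Real.exp (4 * C₁ * Complex.abs z) := Summable.tsum_le_of_sum_le (hsummable z) (hsum z)
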